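/- arXiv:2209.06770 — 2 statements merged into one kernel-verified Lean document; each statement's English description precedes it below -/
import Mathlib

section
/- For any positive integers n and k and any complex number α not a nonpositive integer, the k-th derivative of the generalized binomial coefficient satisfies (d^k/dα^k) C(n+α-1, n) = k! · C(n+α-1, n) · ζ_n({1}_k; α), where C(n+α-1,n) = (α)_n/n! and ζ_n({1}_k; α) = Σ_{n ≥ n_1 > ... > n_k ≥ 1} Π_j 1/(n_j+α-1). -/
/-- Pochhammer symbol `(α)_n = α(α+1)⋯(α+n-1)`. -/
noncomputable def poch (α : ℂ) (n : ℕ) : ℂ := ∏ i ∈ Finset.range n, (α + i)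

/-- Hurwitz-type multiple harmonic sum `ζ_n({1}_k; a) = Σ_{n ≥ n_1 > ⋯ > n_k ≥ 1} Π 1/(n_j+a-1)`. -/
noncomputable def hmhs (a : ℂ) : ℕ → ℕ → ℂ
  | _, 0 => 1
  | n, k + 1 => ∑ j ∈ Finset.Icc 1 n, (1 / ((j : ℂ) + a - 1)) * hmhs a (j - 1) k
  termination_by n k => k

/-- Hurwitz-type multiple harmonic star sum `ζ_n^⋆({1}_k; a) = Σ_{n ≥ n_1 ≥ ⋯ ≥ n_k ≥ 1} Π 1/(n_j+a-1)`. -/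
noncomputable def hmhsStar (a : ℂ) : ℕ → ℕ → ℂ
  | _, 0 => 1
  | n, k + 1 => ∑ j ∈ Finset.Icc 1 n, (1 / ((j : ℂ) + a - 1)) * hmhsStar a j k
  termination_by n k => k

lemma hmhs_zero (a : ℂ) (n : ℕ) : hmhs a n 0 = 1 := by rw [hmhs]

lemma hmhs_succ (a : ℂ) (n k : ℕ) :
    hmhs a n (k + 1) = ∑ j ∈ Finset.Icc 1 n, (1 / ((j : ℂ) + a - 1)) * hmhs a (j - 1) k := by
  rw [hmhs]

lemma hmhs_zero_left (a : ℂ) (k : ℕ) (hk : 1 ≤ k) : hmhs a 0 k = 0 := by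
  cases k with
  | zero => omega
  | succ k => rw [hmhs_succ]; simp

lemma hmhs_succ_left (a : ℂ) (n k : ℕ) :
    hmhs a (n + 1) (k + 1) = hmhs a n (k + 1) + (1 / ((n : ℂ) + a)) * hmhs a n k := by
  rw [hmhs_succ, hmhs_succ, Finset.sum_Icc_succ_top (by omega : 1 ≤ n + 1)]
  congr 2
  push_cast; ring_nf

lemma contDiff_poch (n : ℕ) : ContDiff ℂ ⊤ (fun a : ℂ => poch a n) := by
  unfold poch
  exact contDiff_prod (f := fun (i : ℕ) (a : ℂ) => a + (i : ℂ)) (fun i _ => contDiff_id.add contDiff_const)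

lemma iteratedDeriv_const'' (c : ℂ) (k : ℕ) :
    iteratedDeriv (k + 1) (fun _ : ℂ => c) = fun _ => 0 := by
  induction k with
  | zero => funext x; rw [iteratedDeriv_one]; simp
  | succ k ih =>
    funext x
    rw [iteratedDeriv_succ, ih]
    simp

lemma iteratedDeriv_mul_linear (g : ℂ → ℂ) (hg : ContDiff ℂ ⊤ g) (c : ℂ) (k : ℕ) :
    iteratedDeriv (k + 1) (fun a => g a * (a + c)) =
      fun α => iteratedDeriv (k + 1) g α * (α + c) + (k + 1 : ℂ) * iteratedDeriv k g α := by
  induction k with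
  | zero =>
    funext α
    rw [iteratedDeriv_one, iteratedDeriv_one]
    have h1 : HasDerivAt g (deriv g α) α :=
      ((hg.differentiable (by simp)) α).hasDerivAt
    have h2 : HasDerivAt (fun a : ℂ => a + c) 1 α := (hasDerivAt_id α).add_const c
    rw [HasDerivAt.deriv (f := fun a => g a * (a + c)) (h1.mul h2)]
    simp only [iteratedDeriv_zero]
    push_cast
    ring
  | succ k ih =>
    funext α
    rw [iteratedDeriv_succ, ih]
    have hd1 : Differentiable ℂ (iteratedDeriv (k + 1) g) :=
      hg.differentiable_iteratedDeriv (k + 1) (by exact_mod_cast lt_top_iff_ne_top.2 (by simp))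
    have hd0 : Differentiable ℂ (iteratedDeriv k g) :=
      hg.differentiable_iteratedDeriv k (by exact_mod_cast lt_top_iff_ne_top.2 (by simp))
    have h1 : HasDerivAt (iteratedDeriv (k + 1) g) (iteratedDeriv (k + 1 + 1) g α) α := by
      rw [iteratedDeriv_succ (n := k + 1)]; exact (hd1 α).hasDerivAt
    have h2 : HasDerivAt (fun a : ℂ => a + c) 1 α := (hasDerivAt_id α).add_const c
    have h3 : HasDerivAt (iteratedDeriv k g) (iteratedDeriv (k + 1) g α) α := by
      rw [iteratedDeriv_succ (n := k)]; exact (hd0 α).hasDerivAt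
    rw [HasDerivAt.deriv (f := fun α => iteratedDeriv (k + 1) g α * (α + c) + (↑k + 1) * iteratedDeriv k g α) ((h1.mul h2).add (h3.const_mul ((k : ℂ) + 1)))]
    push_cast
    ring

lemma iteratedDeriv_const_mul' (c : ℂ) (f : ℂ → ℂ) (k : ℕ) :
    iteratedDeriv k (fun a => c * f a) = fun α => c * iteratedDeriv k f α := by
  induction k with
  | zero => simp [iteratedDeriv_zero]
  | succ k ih =>
    funext α
    rw [iteratedDeriv_succ, ih, iteratedDeriv_succ]
    exact deriv_const_mul_field c

lemma main_poch (n : ℕ) : ∀ (k : ℕ) (α : ℂ), (∀ i : ℕ, i < n → α + (i : ℂ) ≠ 0) →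
    iteratedDeriv k (fun a : ℂ => poch a n) α =
      (k.factorial : ℂ) * poch α n * hmhs α n k := by
  induction n with
  | zero =>
    intro k α _
    have h : (fun a : ℂ => poch a 0) = fun _ => (1 : ℂ) := by
      funext a; simp [poch]
    rw [h]
    rcases k with _ | k
    · simp [iteratedDeriv_zero, hmhs_zero, poch]
    · rw [iteratedDeriv_const'', hmhs_zero_left _ _ (by omega)]
      ring
  | succ n ih =>
    intro k α hα
    have hα' : ∀ i : ℕ, i < n → α + (i : ℂ) ≠ 0 := fun i hi => hα i (by omega)
    have hne : α + (n : ℂ) ≠ 0 := hα n (by omega)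
    have heq : (fun a : ℂ => poch a (n + 1)) = fun a => poch a n * (a + n) := by
      funext a; simp [poch, Finset.prod_range_succ]
    have hpoch : poch α (n + 1) = poch α n * (α + n) := by
      simp [poch, Finset.prod_range_succ]
    rcases k with _ | k
    · simp [iteratedDeriv_zero, hmhs_zero]
    · rw [heq, iteratedDeriv_mul_linear _ (contDiff_poch n) _ k]
      beta_reduce
      rw [ih (k + 1) α hα', ih k α hα', hpoch, hmhs_succ_left]
      have hinv : (α + (n : ℂ)) * (1 / ((n : ℂ) + α)) = 1 := by
        rw [div_eq_inv_mul, mul_one]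
        rw [add_comm (n : ℂ) α]
        exact mul_inv_cancel₀ hne
      have hne' : (n : ℂ) + α ≠ 0 := by rwa [add_comm] at hne
      push_cast [Nat.factorial_succ]
      field_simp
      ring

theorem iteratedDeriv_binom (n k : ℕ) (hn : 1 ≤ n) (hk : 1 ≤ k) (α : ℂ)
    (hα : ∀ m : ℕ, α ≠ -(m : ℂ)) :
    iteratedDeriv k (fun a : ℂ => poch a n / (n.factorial : ℂ)) α =
      (k.factorial : ℂ) * (poch α n / (n.factorial : ℂ)) * hmhs α n k := by
  have h1 : (fun a : ℂ => poch a n / (n.factorial : ℂ)) =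
      fun a => ((n.factorial : ℂ))⁻¹ * poch a n := by
    funext a; rw [div_eq_inv_mul]
  rw [h1, iteratedDeriv_const_mul']
  beta_reduce
  rw [main_poch n k α (fun i _ h => hα i (by linear_combination h))]
  have hfac : (n.factorial : ℂ) ≠ 0 := Nat.cast_ne_zero.2 n.factorial_ne_zero
  field_simp
end

section
/- For any complex numbers α, β with Re(α) < 1 and Re(β) < 1, and nonnegative integer m, define ζ^{(α)}(m+1; 1-β) = Σ_{n≥1} C(n+α-2, n-1)/(n-β)^{m+1}. Then ζ^{(α)}(m+1; 1-β) = (1/m!) · (∂^m/∂β^m) B(1-α, 1-β), and in particular ζ^{(α)}(2; 1-β) = −B(1-α, 1-β)·(ψ(1-β) − ψ(2-α-β)). -/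
/-- Beta function `B(a,b) = Γ(a)Γ(b)/Γ(a+b)`. -/
noncomputable def cBeta (a b : ℂ) : ℂ :=
  Complex.Gamma a * Complex.Gamma b / Complex.Gamma (a + b)

/-- Digamma function `ψ(z) = Γ′(z)/Γ(z)`. -/
noncomputable def psiC (z : ℂ) : ℂ := deriv Complex.Gamma z / Complex.Gamma z

/-- `ζ^{(α)}(m+1; 1-β) = Σ_{n ≥ 1} C(n+α-2, n-1)/(n-β)^{m+1}`,
with `C(n+α-2,n-1) = (α)_{n-1}/(n-1)!`, indexed by `n = n'+1`. -/
noncomputable def zetaDepthOne (α β : ℂ) (m : ℕ) : ℂ :=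
  ∑' n : ℕ, (poch α n / (n.factorial : ℂ)) / (((n : ℂ) + 1) - β) ^ (m + 1)

open Complex Finset

noncomputable def pochR (s : ℝ) (n : ℕ) : ℝ := ∏ i ∈ Finset.range n, (s + i)

lemma pochR_pos {s : ℝ} (hs : 0 < s) (n : ℕ) : 0 < pochR s n := by
  apply Finset.prod_pos; intro i _; positivity

lemma pochR_succ (s : ℝ) (n : ℕ) : pochR s (n+1) = pochR s n * (s + n) :=
  Finset.prod_range_succ _ _

lemma poch_succ (α : ℂ) (n : ℕ) : poch α (n+1) = poch α n * (α + n) :=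
  Finset.prod_range_succ _ _

/-- Bernoulli-type bound: `(s)_n / n! ≤ (n+1)^(s-1)` for `0 < s ≤ 1`. -/
lemma pochR_le (s : ℝ) (hs0 : 0 < s) (hs1 : s ≤ 1) (n : ℕ) :
    pochR s n * ((n:ℝ)+1) ^ (1 - s) ≤ n.factorial := by
  induction n with
  | zero => simp [pochR]
  | succ n ih =>
    have hn1 : (0:ℝ) < (n:ℝ) + 1 := by positivity
    have hn2 : (0:ℝ) < (n:ℝ) + 2 := by positivity
    -- Bernoulli: ((n+2)/(n+1))^(1-s) ≤ 1 + (1-s)/(n+1)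
    have hbern : (((n:ℝ)+2)/((n:ℝ)+1)) ^ (1 - s) ≤ 1 + (1 - s) * (1/((n:ℝ)+1)) := by
      have h0 : (0:ℝ) ≤ 1/((n:ℝ)+1) := by positivity
      have := rpow_one_add_le_one_add_mul_self (s := 1/((n:ℝ)+1)) (by linarith)
        (by linarith) (by linarith : 1 - s ≤ 1)
      calc (((n:ℝ)+2)/((n:ℝ)+1)) ^ (1 - s) = (1 + 1/((n:ℝ)+1)) ^ (1-s) := by
            rw [show (1:ℝ) + 1/((n:ℝ)+1) = ((n:ℝ)+2)/((n:ℝ)+1) by field_simp; ring]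
        _ ≤ 1 + (1 - s) * (1/((n:ℝ)+1)) := this
    have hkey : (s + n) * (((n:ℝ)+2)/((n:ℝ)+1)) ^ (1-s) ≤ (n:ℝ) + 1 := by
      have h1 : 0 ≤ s + (n:ℝ) := by positivity
      calc (s + n) * (((n:ℝ)+2)/((n:ℝ)+1)) ^ (1-s)
          ≤ (s + n) * (1 + (1 - s) * (1/((n:ℝ)+1))) := by
            exact mul_le_mul_of_nonneg_left hbern h1
        _ ≤ (n:ℝ) + 1 := by
            rw [div_eq_mul_inv]
            have hinv : ((n:ℝ)+1) * ((n:ℝ)+1)⁻¹ = 1 := by field_simp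
            have h2 : (s+(n:ℝ)) * ((n:ℝ)+1)⁻¹ ≤ 1 := by
              calc (s+(n:ℝ)) * ((n:ℝ)+1)⁻¹ ≤ ((n:ℝ)+1) * ((n:ℝ)+1)⁻¹ :=
                    mul_le_mul_of_nonneg_right (by linarith) (inv_pos.mpr hn1).le
                _ = 1 := hinv
            nlinarith [sub_nonneg.mpr hs1, mul_le_mul_of_nonneg_left h2 (sub_nonneg.mpr hs1)]
    have hppos := (pochR_pos hs0 n).le
    have e1 : ((n:ℝ)+1+1) ^ (1-s) = ((n:ℝ)+1)^(1-s) * (((n:ℝ)+2)/((n:ℝ)+1))^(1-s) := by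
      rw [← Real.mul_rpow hn1.le (by positivity)]
      congr 1; field_simp; ring
    calc pochR s (n+1) * ((↑(n+1):ℝ)+1) ^ (1-s)
        = (pochR s n * ((n:ℝ)+1)^(1-s)) * ((s+n) * (((n:ℝ)+2)/((n:ℝ)+1))^(1-s)) := by
          rw [pochR_succ]; push_cast; rw [e1]; ring
      _ ≤ (n.factorial : ℝ) * ((n:ℝ)+1) := by
          apply mul_le_mul ih hkey (by positivity) (by positivity)
      _ = ((n+1).factorial : ℝ) := by rw [Nat.factorial_succ]; push_cast; ring

/-- choice of `s`. -/
noncomputable def sOf (α : ℂ) : ℝ := (max α.re 0 + 1)/2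

lemma sOf_pos (α : ℂ) : 0 < sOf α := by
  have := le_max_right α.re 0; unfold sOf; linarith

lemma sOf_lt_one {α : ℂ} (hα : α.re < 1) : sOf α < 1 := by
  unfold sOf
  rcases le_or_gt α.re 0 with h0 | h0
  · rw [max_eq_right h0]; norm_num
  · rw [max_eq_left h0.le]; linarith

lemma lt_sOf {α : ℂ} (hα : α.re < 1) : α.re < sOf α := by
  have := le_max_left α.re 0; unfold sOf
  rcases le_or_gt α.re 0 with h0 | h0
  · rw [max_eq_right h0]; linarith
  · rw [max_eq_left h0.le]; linarith

lemma pochAbs_add_le {α : ℂ} (hα : α.re < 1) :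
    ∃ N : ℕ, ∀ i : ℕ, N ≤ i → ‖α + i‖ ≤ sOf α + i := by
  set s := sOf α with hs
  have hsα : α.re < s := lt_sOf hα
  refine ⟨⌈α.im^2/(2*(s - α.re)) + |α.re|⌉₊, fun i hi => ?_⟩
  have hii : α.im^2/(2*(s-α.re)) + |α.re| ≤ (i:ℝ) := le_trans (Nat.le_ceil _) (by exact_mod_cast hi)
  have hd : 0 < s - α.re := by linarith
  have h1 : α.im^2 ≤ 2*(s-α.re) * ((i:ℝ) - |α.re|) := by
    rw [div_add' _ _ _ (by positivity), div_le_iff₀ (by positivity)] at hii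
    nlinarith
  have hsi : 0 ≤ s + i := by have := sOf_pos α; positivity
  have habs : 0 ≤ |α.re| := abs_nonneg _
  have hre : -|α.re| ≤ α.re := neg_abs_le _
  rw [Complex.norm_def, Complex.normSq_apply]
  have : (α + i).re = α.re + i := by simp
  have him : (α + i).im = α.im := by simp
  rw [this, him]
  refine Real.sqrt_le_sqrt ?_ |>.trans (by rw [Real.sqrt_sq hsi])
  nlinarith [sq_nonneg (α.re + i), _root_.sq_abs α.re]

lemma poch_le_pochR {α : ℂ} (hα : α.re < 1) :
    ∃ C : ℝ, 0 ≤ C ∧ ∀ n, ‖poch α n‖ ≤ C * pochR (sOf α) n := by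
  obtain ⟨N, hN⟩ := pochAbs_add_le hα
  set s := sOf α with hs
  have hs0 := sOf_pos α
  set C : ℝ := (Finset.range (N+1)).sup' ⟨0, by simp⟩
      (fun k => ‖poch α k‖ / pochR s k) with hC
  have hCle : ∀ k, k ≤ N → ‖poch α k‖ ≤ C * pochR s k := by
    intro k hk
    have hmem : k ∈ Finset.range (N+1) := by simp; omega
    have := Finset.le_sup' (fun k => ‖poch α k‖ / pochR s k) hmem
    rwa [div_le_iff₀ (pochR_pos hs0 k)] at this
  have hC0 : 0 ≤ C := by
    have := hCle 0 (Nat.zero_le N)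
    simp [poch, pochR] at this
    linarith
  refine ⟨C, hC0, fun n => ?_⟩
  rcases le_or_gt n N with h | h
  · exact hCle n h
  · -- induction from N upwards
    have key : ∀ m, ‖poch α (N + m)‖ ≤ C * pochR s (N + m) := by
      intro m
      induction m with
      | zero => exact hCle N le_rfl
      | succ m ih =>
        have hNm : N ≤ N + m := Nat.le_add_right _ _
        rw [show N + (m+1) = (N+m) + 1 by omega, poch_succ, pochR_succ, norm_mul]
        calc ‖poch α (N+m)‖ * ‖α + (N+m : ℕ)‖
            ≤ (C * pochR s (N+m)) * (s + (N+m : ℕ)) := by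
              exact mul_le_mul ih (hN _ hNm) (norm_nonneg _)
                (mul_nonneg hC0 (pochR_pos hs0 _).le)
          _ = C * (pochR s (N+m) * (s + (N+m:ℕ))) := by push_cast; ring
    have := key (n - N)
    rwa [Nat.add_sub_cancel' h.le] at this

/-- The master bound `|poch α n / n!| ≤ K (n+1)^(s-1)`. -/
lemma poch_div_fact_le {α : ℂ} (hα : α.re < 1) :
    ∃ K : ℝ, 0 ≤ K ∧ ∀ n : ℕ,
      ‖poch α n / n.factorial‖ ≤ K * ((n:ℝ)+1) ^ (sOf α - 1) := by
  obtain ⟨C, hC0, hC⟩ := poch_le_pochR hα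
  have hs0 := sOf_pos α
  have hs1 := sOf_lt_one hα
  refine ⟨C, hC0, fun n => ?_⟩
  have hfac : (0:ℝ) < n.factorial := by exact_mod_cast n.factorial_pos
  have hrp : (0:ℝ) < ((n:ℝ)+1) ^ (1 - sOf α) := by positivity
  have h1 : pochR (sOf α) n ≤ (n.factorial : ℝ) * ((n:ℝ)+1) ^ (sOf α - 1) := by
    have := pochR_le (sOf α) hs0 hs1.le n
    rw [← le_div_iff₀ hrp] at this
    rw [show (sOf α - 1) = -(1 - sOf α) by ring,
      Real.rpow_neg (by positivity : (0:ℝ) ≤ (n:ℝ)+1), ← div_eq_mul_inv]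
    exact this
  rw [norm_div, Complex.norm_natCast]
  rw [div_le_iff₀ hfac]
  calc ‖poch α n‖ ≤ C * pochR (sOf α) n := hC n
    _ ≤ C * ((n.factorial : ℝ) * ((n:ℝ)+1) ^ (sOf α - 1)) := by
        apply mul_le_mul_of_nonneg_left h1 hC0
    _ = C * ((n:ℝ)+1) ^ (sOf α - 1) * n.factorial := by ring

lemma summable_poch_div {α : ℂ} (hα : α.re < 1) (k : ℕ) {c : ℝ} (hc : c < 1) :
    Summable (fun n : ℕ => ‖poch α n / n.factorial‖ / ((n:ℝ)+1-c)^(k+1)) := by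
  obtain ⟨K, hK0, hK⟩ := poch_div_fact_le hα
  set s := sOf α with hs
  set m : ℝ := min (1-c) 1 with hm
  have hm0 : 0 < m := lt_min (by linarith) one_pos
  have hmn : ∀ n : ℕ, m * ((n:ℝ)+1) ≤ (n:ℝ)+1-c := by
    intro n
    have h1 : m ≤ 1 - c := min_le_left _ _
    have h2 : m ≤ 1 := min_le_right _ _
    have h3 : m * (n:ℝ) ≤ (n:ℝ) := by
      calc m * (n:ℝ) ≤ 1 * (n:ℝ) := mul_le_mul_of_nonneg_right h2 (Nat.cast_nonneg n)
        _ = (n:ℝ) := one_mul _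
    nlinarith
  have hsum : Summable (fun n : ℕ => ((n:ℝ)+1) ^ (s - 2)) := by
    have h1 : Summable (fun n : ℕ => ((n:ℝ)) ^ (s - 2)) :=
      Real.summable_nat_rpow.mpr (by have := sOf_lt_one hα; linarith)
    have h2 := (summable_nat_add_iff 1).mpr h1
    refine h2.congr fun n => ?_
    push_cast; ring_nf
  have hden : ∀ n : ℕ, (0:ℝ) < ((n:ℝ)+1-c)^(k+1) := by
    intro n; apply pow_pos; have := hmn n; nlinarith [mul_pos hm0 (show (0:ℝ) < (n:ℝ)+1 by positivity)]
  refine ((hsum.mul_left (K / m^(k+1))).of_nonneg_of_le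
    (fun n => div_nonneg (norm_nonneg _) (hden n).le) fun n => ?_)
  have hd0 : (0:ℝ) < m^(k+1) * ((n:ℝ)+1) := by positivity
  have hdle : m^(k+1) * ((n:ℝ)+1) ≤ ((n:ℝ)+1-c)^(k+1) := by
    calc m^(k+1) * ((n:ℝ)+1) ≤ m^(k+1) * ((n:ℝ)+1)^(k+1) := by
          apply mul_le_mul_of_nonneg_left _ (by positivity)
          exact le_self_pow₀ (by linarith [Nat.cast_nonneg (α := ℝ) n]) (by omega)
      _ = (m * ((n:ℝ)+1))^(k+1) := (mul_pow _ _ _).symm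
      _ ≤ ((n:ℝ)+1-c)^(k+1) := by
          apply pow_le_pow_left₀ (by positivity) (hmn n)
  calc ‖poch α n / n.factorial‖ / ((n:ℝ)+1-c)^(k+1)
      ≤ (K * ((n:ℝ)+1)^(s-1)) / (m^(k+1) * ((n:ℝ)+1)) :=
        div_le_div₀ (by positivity) (hK n) hd0 hdle
    _ = K / m^(k+1) * ((n:ℝ)+1)^(s-2) := by
        have e : ((n:ℝ)+1)^(s-1) = ((n:ℝ)+1)^(s-2) * ((n:ℝ)+1) := by
          rw [← Real.rpow_add_one (by positivity : ((n:ℝ)+1) ≠ 0)]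
          congr 1; ring
        rw [e]
        have h1 : ((n:ℝ)+1) ≠ 0 := by positivity
        have h2 : m^(k+1) ≠ 0 := by positivity
        field_simp

lemma hasSum_binomial {α : ℂ} (hα : α.re < 1) {x : ℝ} (hx0 : 0 ≤ x) (hx1 : x < 1) :
    HasSum (fun n : ℕ => poch α n / n.factorial * (x:ℂ)^n) ((1 - (x:ℂ)) ^ (-α)) := by
  obtain ⟨K, hK0, hKb'⟩ := poch_div_fact_le hα
  have hKb : ∀ n : ℕ, ‖poch α n / n.factorial‖ ≤ K := by
    intro n
    refine (hKb' n).trans ?_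
    have h1 : ((n:ℝ)+1) ^ (sOf α - 1) ≤ 1 :=
      Real.rpow_le_one_of_one_le_of_nonpos (by linarith [Nat.cast_nonneg (α := ℝ) n])
        (by linarith [sOf_lt_one hα])
    nlinarith
  set r : ℝ := (x+1)/2 with hr
  have hr0 : 0 < r := by positivity
  have hr1 : r < 1 := by rw [hr]; linarith
  have hxr : x < r := by rw [hr]; linarith
  have hnorm : ∀ (n : ℕ) (y : ℝ),
      ‖poch α n / n.factorial * (y:ℂ)^n‖ = ‖poch α n / n.factorial‖ * |y|^n := by
    intro n y; rw [norm_mul, norm_pow, Complex.norm_real, Real.norm_eq_abs]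
  have hsummable_at : ∀ y : ℝ, |y| ≤ r →
      Summable (fun n : ℕ => poch α n / n.factorial * (y:ℂ)^n) := by
    intro y hy
    apply Summable.of_norm
    refine (((summable_geometric_of_lt_one hr0.le hr1).mul_left K).of_nonneg_of_le
      (fun n => norm_nonneg _) fun n => ?_)
    rw [hnorm]
    exact mul_le_mul (hKb n) (pow_le_pow_left₀ (abs_nonneg _) hy n) (by positivity) hK0
  set a : ℕ → ℂ := fun n => poch α n / n.factorial with ha
  set h : ℝ → ℂ := fun y => ∑' n, a n * (y:ℂ)^n with hh
  set D : ℝ → ℂ := fun y => ∑' n : ℕ, a n * ((n:ℂ) * (y:ℂ)^(n-1)) with hD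
  set u : ℕ → ℝ := fun n => K * r⁻¹ * ((n:ℝ) * r^n) with hu
  have hu_sum : Summable u := by
    apply Summable.mul_left
    have := summable_pow_mul_geometric_of_norm_lt_one (R := ℝ) 1
      (r := r) (by rw [Real.norm_eq_abs, abs_of_pos hr0]; exact hr1)
    simpa using this
  have hDbound : ∀ (n : ℕ) (y : ℝ), y ∈ Set.Ioo (-r) r →
      ‖a n * ((n:ℂ) * (y:ℂ)^(n-1))‖ ≤ u n := by
    intro n y hy
    have hyr : |y| ≤ r := by rw [abs_le]; exact ⟨hy.1.le, hy.2.le⟩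
    rw [norm_mul, norm_mul, norm_pow, Complex.norm_real, Real.norm_eq_abs, Complex.norm_natCast]
    match n with
    | 0 => simp [hu]
    | (m+1) =>
      have : |y| ^ (m+1-1) ≤ r^m := by simpa using pow_le_pow_left₀ (abs_nonneg _) hyr m
      calc ‖a (m+1)‖ * ((m+1:ℕ) * |y|^(m+1-1))
          ≤ K * ((m+1:ℕ) * r^m) := by
            apply mul_le_mul (hKb _) _ (by positivity) hK0
            exact mul_le_mul_of_nonneg_left this (by positivity)
        _ = u (m+1) := by
            rw [hu]
            have : r ^ (m+1) = r * r^m := by ring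
            push_cast
            rw [this]
            field_simp
  have hhD : ∀ y ∈ Set.Ioo (-r) r, HasDerivAt h (D y) y := by
    intro y hy
    exact hasDerivAt_tsum_of_isPreconnected hu_sum isOpen_Ioo isPreconnected_Ioo
      (fun n z _ => ((hasDerivAt_pow n ((z:ℝ):ℂ)).comp_ofReal).const_mul (a n))
      hDbound (by constructor <;> [linarith; exact hr0] :
        (0:ℝ) ∈ Set.Ioo (-r) r)
      (hsummable_at 0 (by rw [abs_zero]; exact hr0.le)) hy
  -- the functional identity (1-y) D y = α h y
  have hrel : ∀ y : ℝ, y ∈ Set.Ioo (-r) r → (1 - (y:ℂ)) * D y = α * h y := by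
    intro y hy
    have hyr : |y| ≤ r := by rw [abs_le]; exact ⟨hy.1.le, hy.2.le⟩
    have hsum_h : HasSum (fun n => a n * (y:ℂ)^n) (h y) := (hsummable_at y hyr).hasSum
    have hsumD : Summable (fun n : ℕ => a n * ((n:ℂ) * (y:ℂ)^(n-1))) := by
      apply Summable.of_norm
      exact hu_sum.of_nonneg_of_le (fun n => norm_nonneg _) (fun n => hDbound n y hy)
    have hsum_D : HasSum (fun n : ℕ => a n * ((n:ℂ) * (y:ℂ)^(n-1))) (D y) := hsumD.hasSum
    -- shifted series
    have hshift : HasSum (fun n : ℕ => a (n+1) * (((n:ℂ)+1) * (y:ℂ)^n)) (D y) := by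
      have hs2 : HasSum (fun n : ℕ =>
          (fun j : ℕ => a j * ((j:ℂ) * (y:ℂ)^(j-1))) (n+1)) (D y) :=
        (hasSum_nat_add_iff (f := fun j : ℕ => a j * ((j:ℂ) * (y:ℂ)^(j-1))) 1).mpr
          (by simpa using hsum_D)
      have e : (fun n : ℕ => (fun j : ℕ => a j * ((j:ℂ) * (y:ℂ)^(j-1))) (n+1))
          = fun n : ℕ => a (n+1) * (((n:ℂ)+1) * (y:ℂ)^n) := by
        funext n
        simp only [Nat.add_sub_cancel]
        push_cast
        ring
      exact e ▸ hs2

    have hrec : ∀ n : ℕ, a (n+1) * (((n:ℂ)+1) * (y:ℂ)^n) = (α + n) * (a n * (y:ℂ)^n) := by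
      intro n
      rw [ha]
      simp only [poch_succ, Nat.factorial_succ]
      have hn1 : ((n:ℂ)+1) ≠ 0 := Nat.cast_add_one_ne_zero n
      have hfac : ((n.factorial : ℂ)) ≠ 0 := by exact_mod_cast Nat.cast_ne_zero.mpr n.factorial_pos.ne'
      push_cast
      field_simp
    have h1 : HasSum (fun n : ℕ => (α + n) * (a n * (y:ℂ)^n)) (D y) :=
      (funext hrec : _) ▸ hshift
    have h2 : HasSum (fun n : ℕ => (y:ℂ) * (a n * ((n:ℂ) * (y:ℂ)^(n-1)))) ((y:ℂ) * D y) :=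
      hsum_D.mul_left (y:ℂ)
    have h2e : ∀ n : ℕ, (y:ℂ) * (a n * ((n:ℂ) * (y:ℂ)^(n-1))) = (n:ℂ) * (a n * (y:ℂ)^n) := by
      intro n
      match n with
      | 0 => simp
      | (m+1) => rw [Nat.add_sub_cancel, pow_succ]; push_cast; ring
    have h2' : HasSum (fun n : ℕ => (n:ℂ) * (a n * (y:ℂ)^n)) ((y:ℂ) * D y) :=
      (funext h2e : _) ▸ h2
    have h3 := h1.sub h2'
    have h3e : ∀ n : ℕ, (α + n) * (a n * (y:ℂ)^n) - (n:ℂ) * (a n * (y:ℂ)^n)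
        = α * (a n * (y:ℂ)^n) := fun n => by ring
    have h3' : HasSum (fun n : ℕ => α * (a n * (y:ℂ)^n)) (D y - (y:ℂ) * D y) :=
      (funext h3e : _) ▸ h3
    have h4 : HasSum (fun n : ℕ => α * (a n * (y:ℂ)^n)) (α * h y) := hsum_h.mul_left α
    have := h3'.unique h4
    linear_combination this
  -- the ODE argument
  have hODE : ∀ z : ℝ, z ∈ Set.Icc 0 x → HasDerivAt (fun y : ℝ => (1 - (y:ℂ))^α * h y) 0 z := by
    intro z hz
    have hzmem : z ∈ Set.Ioo (-r) r := ⟨by linarith [hz.1], by linarith [hz.2]⟩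
    have hz1 : z < 1 := by linarith [hz.2]
    have hslit : (1 - ((z:ℝ):ℂ)) ∈ Complex.slitPlane := by
      apply Or.inl
      simp only [Complex.sub_re, Complex.one_re, Complex.ofReal_re]
      linarith
    have hcz : (1 - ((z:ℝ):ℂ)) ≠ 0 := by
      intro hcon
      have := congrArg Complex.re hcon
      simp only [Complex.sub_re, Complex.one_re, Complex.ofReal_re, Complex.zero_re] at this
      linarith
    have hw0 : HasDerivAt (fun ζ : ℂ => (1 - ζ)^α) (α * (1 - ((z:ℝ):ℂ))^(α-1) * (-1)) ((z:ℝ):ℂ) := by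
      exact HasDerivAt.cpow_const ((hasDerivAt_id _).const_sub 1) hslit
    have hw : HasDerivAt (fun y : ℝ => (1 - (y:ℂ))^α) (α * (1 - ((z:ℝ):ℂ))^(α-1) * (-1)) z :=
      hw0.comp_ofReal
    have hprod := hw.mul (hhD z hzmem)
    have hkey : α * (1 - ((z:ℝ):ℂ))^(α-1) * (-1) * h z + (1 - ((z:ℝ):ℂ))^α * D z = 0 := by
      have e1 : (1 - ((z:ℝ):ℂ))^α = (1 - ((z:ℝ):ℂ))^(α-1) * (1 - ((z:ℝ):ℂ)) := by
        conv_rhs => rw [Complex.cpow_sub _ _ hcz, Complex.cpow_one]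
        exact (div_mul_cancel₀ _ hcz).symm
      rw [e1]
      have := hrel z hzmem
      calc α * (1 - ((z:ℝ):ℂ))^(α-1) * (-1) * h z + (1 - ((z:ℝ):ℂ))^(α-1) * (1 - ((z:ℝ):ℂ)) * D z
          = (1 - ((z:ℝ):ℂ))^(α-1) * ((1 - ((z:ℝ):ℂ)) * D z - α * h z) := by ring
        _ = 0 := by rw [this]; ring
      -- end
    rw [← hkey]
    exact hprod
  have hconst := constant_of_has_deriv_right_zero
    (f := fun y : ℝ => (1 - (y:ℂ))^α * h y) (a := 0) (b := x)
    (fun z hz => (hODE z hz).continuousAt.continuousWithinAt)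
    (fun z hz => (hODE z ⟨hz.1, hz.2.le⟩).hasDerivWithinAt)
  have hx_icc : x ∈ Set.Icc (0:ℝ) x := ⟨hx0, le_refl x⟩
  have heval := hconst x hx_icc
  -- φ 0 = 1
  have hh0 : h 0 = 1 := by
    have he : h 0 = ∑' n : ℕ, a n * ((0:ℝ):ℂ)^n := rfl
    rw [he, tsum_eq_single 0 ?_]
    · simp [ha, poch]
    · intro n hn
      match n, hn with
      | (m+1), _ => simp
  have hphi0 : (1 - ((0:ℝ):ℂ))^α * h 0 = 1 := by
    rw [hh0]
    simp [Complex.one_cpow]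
  rw [hphi0] at heval
  -- conclude
  have hcx : (1 - ((x:ℝ):ℂ)) ≠ 0 := by
    intro hcon
    have := congrArg Complex.re hcon
    simp only [Complex.sub_re, Complex.one_re, Complex.ofReal_re, Complex.zero_re] at this
    linarith
  have hcxpow : (1 - ((x:ℝ):ℂ))^α ≠ 0 := by
    rw [Complex.cpow_def_of_ne_zero hcx]
    exact Complex.exp_ne_zero _
  have hhx : h x = (1 - ((x:ℝ):ℂ))^(-α) := by
    rw [Complex.cpow_neg]
    field_simp at heval ⊢
    linear_combination heval
  have := (hsummable_at x (by rw [_root_.abs_of_nonneg hx0]; exact hxr.le)).hasSum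
  rw [show (∑' n, a n * ((x:ℝ):ℂ)^n) = h x from rfl, hhx] at this
  exact this

open MeasureTheory in
lemma hasSum_cBeta {α b : ℂ} (hα : α.re < 1) (hb : b.re < 1) :
    HasSum (fun n : ℕ => poch α n / n.factorial / (((n:ℂ)+1) - b)) (cBeta (1-α) (1-b)) := by
  have h1α : 0 < (1-α).re := by simp [Complex.sub_re]; linarith
  have h1b : 0 < (1-b).re := by simp [Complex.sub_re]; linarith
  have hre : ∀ n : ℕ, 0 < ((n:ℂ)+1-b).re := by
    intro n
    simp [Complex.add_re, Complex.sub_re, Complex.natCast_re]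
    linarith [Nat.cast_nonneg (α := ℝ) n]
  have hzne : ∀ n : ℕ, ((n:ℂ)+1-b) ≠ 0 := by
    intro n hcon
    have := hre n
    rw [hcon] at this
    simp at this
  set a : ℕ → ℂ := fun n => poch α n / n.factorial with ha
  set F : ℕ → ℝ → ℂ := fun n x => a n * (x:ℂ)^((n:ℂ) - b) with hF
  -- integrability
  have hInt0 : ∀ n : ℕ, IntegrableOn (fun x : ℝ => (x:ℂ)^((n:ℂ)-b)) (Set.Ioo 0 1) := by
    intro n
    have hconv := Complex.betaIntegral_convergent (u := (n:ℂ)+1-b) (v := 1) (hre n) (by simp)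
    rw [intervalIntegrable_iff, Set.uIoc_of_le zero_le_one] at hconv
    have he : (fun x : ℝ => (x:ℂ)^((n:ℂ)+1-b-1) * (1-(x:ℂ))^((1:ℂ)-1))
        = fun x : ℝ => (x:ℂ)^((n:ℂ)-b) := by
      funext x
      rw [show (n:ℂ)+1-b-1 = (n:ℂ)-b by ring, sub_self, Complex.cpow_zero, mul_one]
    rw [he] at hconv
    exact hconv.mono_set Set.Ioo_subset_Ioc_self
  have hInt : ∀ n : ℕ, IntegrableOn (F n) (Set.Ioo 0 1) := fun n => (hInt0 n).const_mul _
  -- value of each integral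
  have hval : ∀ n : ℕ, ∫ x in Set.Ioo (0:ℝ) 1, (x:ℂ)^((n:ℂ)-b) = 1/((n:ℂ)+1-b) := by
    intro n
    have hbv := Complex.betaIntegral_eval_one_right (u := (n:ℂ)+1-b) (hre n)
    rw [Complex.betaIntegral] at hbv
    have he : (fun x : ℝ => (x:ℂ)^((n:ℂ)+1-b-1) * (1-(x:ℂ))^((1:ℂ)-1))
        = fun x : ℝ => (x:ℂ)^((n:ℂ)-b) := by
      funext x
      rw [show (n:ℂ)+1-b-1 = (n:ℂ)-b by ring, sub_self, Complex.cpow_zero, mul_one]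
    rw [he, intervalIntegral.integral_of_le zero_le_one, integral_Ioc_eq_integral_Ioo] at hbv
    exact hbv
  -- norm integrals
  have hnormval : ∀ n : ℕ, ∫ x in Set.Ioo (0:ℝ) 1, ‖F n x‖
      = ‖a n‖ / ((n:ℝ)+1-b.re) := by
    intro n
    have hcongr : ∫ x in Set.Ioo (0:ℝ) 1, ‖F n x‖
        = ∫ x in Set.Ioo (0:ℝ) 1, ‖a n‖ * x^((n:ℝ) - b.re) := by
      apply setIntegral_congr_fun measurableSet_Ioo
      intro x hx
      rw [hF]
      simp only [norm_mul]
      congr 1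
      rw [Complex.norm_cpow_eq_rpow_re_of_pos hx.1]
      congr 1
      all_goals simp [Complex.sub_re, Complex.natCast_re]
    rw [hcongr, integral_const_mul]
    have hrint : ∫ x in Set.Ioo (0:ℝ) 1, x^((n:ℝ) - b.re)
        = 1/((n:ℝ)+1-b.re) := by
      rw [← integral_Ioc_eq_integral_Ioo, ← intervalIntegral.integral_of_le zero_le_one]
      rw [integral_rpow (Or.inl (by linarith [Nat.cast_nonneg (α := ℝ) n]))]
      rw [Real.one_rpow, Real.zero_rpow (by
        have := Nat.cast_nonneg (α := ℝ) n; intro hcon; linarith),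
        show (n:ℝ) - b.re + 1 = (n:ℝ)+1-b.re by ring]
      norm_num
    rw [hrint]
    ring
  have hF_sum : Summable fun n => ∫ x in Set.Ioo (0:ℝ) 1, ‖F n x‖ := by
    refine Summable.congr ?_ (fun n => (hnormval n).symm)
    have := summable_poch_div hα 0 hb
    refine this.congr fun n => ?_
    rw [pow_one]
  -- the swap
  have hswap := hasSum_integral_of_summable_integral_norm (μ := volume.restrict (Set.Ioo (0:ℝ) 1))
    (F := F) hInt hF_sum
  -- pointwise tsum
  have hpt : ∀ x ∈ Set.Ioo (0:ℝ) 1, ∑' n, F n x = (x:ℂ)^(-b) * (1-(x:ℂ))^(-α) := by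
    intro x hx
    have hxne : ((x:ℝ):ℂ) ≠ 0 := by
      simp only [ne_eq, Complex.ofReal_eq_zero]
      exact hx.1.ne'
    have hs := hasSum_binomial hα hx.1.le hx.2
    have hs2 := hs.mul_right ((x:ℂ)^(-b))
    have he : (fun n : ℕ => poch α n / n.factorial * (x:ℂ)^n * (x:ℂ)^(-b)) = fun n => F n x := by
      funext n
      rw [hF]
      show _ = a n * (x:ℂ)^((n:ℂ) - b)
      rw [show (n:ℂ) - b = (n:ℂ) + (-b) by ring, Complex.cpow_add _ _ hxne, Complex.cpow_natCast]
      rw [ha]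
      ring
    rw [he] at hs2
    rw [hs2.tsum_eq, mul_comm]
  -- identify the integral with cBeta
  have hGne : Complex.Gamma ((1-α)+(1-b)) ≠ 0 := by
    apply Complex.Gamma_ne_zero_of_re_pos
    rw [Complex.add_re]
    linarith
  have hbeta : cBeta (1-α) (1-b) = Complex.betaIntegral (1-b) (1-α) := by
    have hg := Complex.Gamma_mul_Gamma_eq_betaIntegral h1b h1α
    have hGne' : Complex.Gamma ((1-b)+(1-α)) ≠ 0 := by
      rwa [show (1:ℂ)-b+(1-α) = 1-α+(1-b) by ring]
    rw [cBeta, show (1:ℂ)-α+(1-b) = 1-b+(1-α) by ring,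
      show Complex.Gamma (1-α) * Complex.Gamma (1-b)
        = Complex.Gamma (1-b) * Complex.Gamma (1-α) from mul_comm _ _, hg,
      mul_div_cancel_left₀ _ hGne']
  have hbeta2 : Complex.betaIntegral (1-b) (1-α)
      = ∫ x in Set.Ioo (0:ℝ) 1, (x:ℂ)^(-b) * (1-(x:ℂ))^(-α) := by
    rw [Complex.betaIntegral]
    have he : (fun x : ℝ => (x:ℂ)^((1:ℂ)-b-1) * (1-(x:ℂ))^((1:ℂ)-α-1))
        = fun x : ℝ => (x:ℂ)^(-b) * (1-(x:ℂ))^(-α) := by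
      funext x
      rw [show (1:ℂ)-b-1 = -b by ring, show (1:ℂ)-α-1 = -α by ring]
    rw [he, intervalIntegral.integral_of_le zero_le_one, integral_Ioc_eq_integral_Ioo]
  -- put together
  have hintF : ∀ n : ℕ, (∫ x in Set.Ioo (0:ℝ) 1, F n x) = a n / ((n:ℂ)+1-b) := by
    intro n
    rw [hF]
    show (∫ x in Set.Ioo (0:ℝ) 1, a n * (x:ℂ)^((n:ℂ)-b)) = _
    rw [integral_const_mul, hval n]
    rw [mul_one_div]
  have hfinal : (∫ x in Set.Ioo (0:ℝ) 1, ∑' n, F n x) = cBeta (1-α) (1-b) := by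
    rw [setIntegral_congr_fun measurableSet_Ioo hpt, hbeta, hbeta2]
  rw [hfinal] at hswap
  have he2 : (fun n : ℕ => ∫ x in Set.Ioo (0:ℝ) 1, F n x)
      = fun n : ℕ => poch α n / n.factorial / (((n:ℂ)+1) - b) := by
    funext n
    rw [hintF n]
  rwa [he2] at hswap

lemma hasDerivAt_SS {α : ℂ} (hα : α.re < 1) (k : ℕ) {b : ℂ} (hb : b.re < 1) :
    HasDerivAt (fun y : ℂ => ∑' n : ℕ, poch α n / n.factorial / (((n:ℂ)+1) - y)^(k+1))
      (((k:ℂ)+1) * ∑' n : ℕ, poch α n / n.factorial / (((n:ℂ)+1) - b)^(k+2)) b := by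
  set c : ℝ := (1 + b.re)/2 with hc
  have hbc : b.re < c := by rw [hc]; linarith
  have hc1 : c < 1 := by rw [hc]; linarith
  set t : Set ℂ := {y : ℂ | y.re < c} with ht
  have htopen : IsOpen t := isOpen_lt Complex.continuous_re continuous_const
  have htconn : IsPreconnected t := (convex_halfSpace_re_lt c).isPreconnected
  have hbt : b ∈ t := hbc
  have hwpos : ∀ (n : ℕ) (y : ℂ), y ∈ t → 0 < ((n:ℝ)+1-c) ∧ ((n:ℝ)+1-c) ≤ ‖((n:ℂ)+1) - y‖ := by
    intro n y hy
    have hyre : y.re < c := hy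
    constructor
    · linarith [Nat.cast_nonneg (α := ℝ) n]
    · calc ((n:ℝ)+1-c) ≤ (((n:ℂ)+1) - y).re := by
            simp only [Complex.sub_re, Complex.add_re, Complex.natCast_re, Complex.one_re]
            linarith
        _ ≤ ‖((n:ℂ)+1) - y‖ := Complex.re_le_norm _
  have hwne : ∀ (n : ℕ) (y : ℂ), y ∈ t → (((n:ℂ)+1) - y) ≠ 0 := by
    intro n y hy hcon
    obtain ⟨h1, h2⟩ := hwpos n y hy
    rw [hcon] at h2
    simp at h2
    linarith
  set a : ℕ → ℂ := fun n => poch α n / n.factorial with ha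
  set u : ℕ → ℝ := fun n => ((k:ℝ)+1) * (‖a n‖ / ((n:ℝ)+1-c)^(k+2)) with hu
  have hu_sum : Summable u := by
    apply Summable.mul_left
    have := summable_poch_div hα (k+1) hc1
    exact this.congr fun n => rfl
  have hder : ∀ (n : ℕ) (y : ℂ), y ∈ t →
      HasDerivAt (fun z : ℂ => a n / (((n:ℂ)+1) - z)^(k+1))
        (((k:ℂ)+1) * (a n / (((n:ℂ)+1) - y)^(k+2))) y := by
    intro n y hy
    have hne := hwne n y hy
    have hin : HasDerivAt (fun z : ℂ => ((n:ℂ)+1) - z) (-1) y := (hasDerivAt_id y).const_sub _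
    have hpow := hasDerivAt_pow (k+1) ((((n:ℂ)+1) - y))
    have hcomp := HasDerivAt.comp y hpow hin
    have hd := (hasDerivAt_const y (a n)).div hcomp (pow_ne_zero _ hne)
    refine hd.congr_deriv ?_
    have hpne : (((n:ℂ)+1) - y)^(k+1) ≠ 0 := pow_ne_zero _ hne
    have hpe : ((((n:ℂ)+1) - y)^(k+1))^2 = (((n:ℂ)+1) - y)^k * (((n:ℂ)+1) - y)^(k+2) := by
      rw [← pow_mul, ← pow_add]
      congr 1
      omega
    have hk1 : (k+1-1 : ℕ) = k := rfl
    rw [Function.comp_def] at *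
    field_simp [hpe]
    push_cast [hk1]
    ring
  have hbound : ∀ (n : ℕ) (y : ℂ), y ∈ t →
      ‖((k:ℂ)+1) * (a n / (((n:ℂ)+1) - y)^(k+2))‖ ≤ u n := by
    intro n y hy
    obtain ⟨h1, h2⟩ := hwpos n y hy
    rw [norm_mul, norm_div, norm_pow]
    have habs1 : ‖(k:ℂ)+1‖ = (k:ℝ)+1 := by
      rw [show ((k:ℂ)+1) = ((k+1:ℕ):ℂ) by push_cast; ring, Complex.norm_natCast]
      push_cast; ring
    rw [habs1, hu]
    apply mul_le_mul_of_nonneg_left _ (by positivity)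
    apply div_le_div_of_nonneg_left (norm_nonneg _) (by positivity)
    exact pow_le_pow_left₀ h1.le h2 _
  have hg0 : Summable (fun n : ℕ => a n / (((n:ℂ)+1) - b)^(k+1)) := by
    apply Summable.of_norm
    refine (summable_poch_div hα k hc1).of_nonneg_of_le (fun n => norm_nonneg _) fun n => ?_
    obtain ⟨h1, h2⟩ := hwpos n b hbt
    rw [norm_div, norm_pow]
    apply div_le_div_of_nonneg_left (norm_nonneg _) (by positivity)
    exact pow_le_pow_left₀ h1.le h2 _
  have := hasDerivAt_tsum_of_isPreconnected hu_sum htopen htconn hder hbound hbt hg0 hbt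
  refine this.congr_deriv ?_
  rw [← tsum_mul_left]

lemma iteratedDeriv_cBeta {α : ℂ} (hα : α.re < 1) :
    ∀ (k : ℕ) {b : ℂ}, b.re < 1 →
    iteratedDeriv k (fun y : ℂ => cBeta (1-α) (1-y)) b
      = (k.factorial : ℂ) * ∑' n : ℕ, poch α n / n.factorial / (((n:ℂ)+1) - b)^(k+1) := by
  intro k
  induction k with
  | zero =>
    intro b hb
    rw [iteratedDeriv_zero]
    simp only [Nat.factorial_zero, Nat.cast_one, one_mul]
    rw [show (∑' n : ℕ, poch α n / n.factorial / (((n:ℂ)+1) - b)^(0+1))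
        = ∑' n : ℕ, poch α n / n.factorial / (((n:ℂ)+1) - b) from tsum_congr fun n => by rw [pow_one]]
    exact (hasSum_cBeta hα hb).tsum_eq.symm
  | succ k ih =>
    intro b hb
    rw [iteratedDeriv_succ]
    have hopen : IsOpen {y : ℂ | y.re < 1} := isOpen_lt Complex.continuous_re continuous_const
    have hev : (iteratedDeriv k fun y : ℂ => cBeta (1-α) (1-y)) =ᶠ[nhds b]
        (fun y => (k.factorial : ℂ) * ∑' n : ℕ, poch α n / n.factorial / (((n:ℂ)+1) - y)^(k+1)) := by
      filter_upwards [hopen.mem_nhds (show b ∈ {y : ℂ | y.re < 1} from hb)] with y hy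
      exact ih hy
    rw [hev.deriv_eq]
    have hd := (hasDerivAt_SS hα k hb).const_mul (k.factorial : ℂ)
    rw [hd.deriv, Nat.factorial_succ]
    push_cast
    ring

theorem zetaDepthOne_eq_deriv_beta (m : ℕ) (α β : ℂ) (hα : α.re < 1) (hβ : β.re < 1) :
    zetaDepthOne α β m =
        (1 / (m.factorial : ℂ)) * iteratedDeriv m (fun b : ℂ => cBeta (1 - α) (1 - b)) β
    ∧ zetaDepthOne α β 1 =
        -cBeta (1 - α) (1 - β) * (psiC (1 - β) - psiC (2 - α - β)) := by
  have hfac : ∀ j : ℕ, ((j.factorial : ℂ)) ≠ 0 := fun j => by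
    exact_mod_cast Nat.cast_ne_zero.mpr j.factorial_pos.ne'
  constructor
  · rw [zetaDepthOne, iteratedDeriv_cBeta hα m hβ, one_div, inv_mul_cancel_left₀ (hfac m)]
  · have h1 := iteratedDeriv_cBeta hα 1 hβ
    rw [iteratedDeriv_one] at h1
    have hz : zetaDepthOne α β 1 = deriv (fun y : ℂ => cBeta (1-α) (1-y)) β := by
      rw [zetaDepthOne, h1, Nat.factorial_one, Nat.cast_one, one_mul]
    rw [hz]
    -- compute the derivative explicitly
    have hre1 : 0 < ((1:ℂ)-β).re := by simp [Complex.sub_re]; linarith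
    have hre2 : 0 < ((2:ℂ)-α-β).re := by
      simp [Complex.sub_re, Complex.one_re]
      norm_num
      linarith
    have hne_neg : ∀ s : ℂ, 0 < s.re → ∀ j : ℕ, s ≠ -(j:ℂ) := by
      intro s hs j hcon
      rw [hcon] at hs
      simp only [Complex.neg_re, Complex.natCast_re] at hs
      have := Nat.cast_nonneg (α := ℝ) j
      linarith
    have hΓ1 : HasDerivAt Complex.Gamma (deriv Complex.Gamma (1-β)) (1-β) :=
      (Complex.differentiableAt_Gamma _ (hne_neg _ hre1)).hasDerivAt
    have hΓ2 : HasDerivAt Complex.Gamma (deriv Complex.Gamma ((2-α)-β)) ((2-α)-β) :=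
      (Complex.differentiableAt_Gamma _ (hne_neg _ hre2)).hasDerivAt
    have hΓne1 : Complex.Gamma (1-β) ≠ 0 := Complex.Gamma_ne_zero_of_re_pos hre1
    have hΓne2 : Complex.Gamma ((2-α)-β) ≠ 0 := Complex.Gamma_ne_zero_of_re_pos hre2
    have d1 : HasDerivAt (fun y : ℂ => Complex.Gamma (1-y)) (deriv Complex.Gamma (1-β) * (-1)) β :=
      HasDerivAt.comp β hΓ1 ((hasDerivAt_id β).const_sub 1)
    have d2 : HasDerivAt (fun y : ℂ => Complex.Gamma ((2-α)-y)) (deriv Complex.Gamma ((2-α)-β) * (-1)) β :=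
      HasDerivAt.comp β hΓ2 ((hasDerivAt_id β).const_sub (2-α))
    have hFG : (fun y : ℂ => cBeta (1-α) (1-y))
        = fun y : ℂ => Complex.Gamma (1-α) * Complex.Gamma (1-y) / Complex.Gamma ((2-α)-y) := by
      funext y
      rw [cBeta]
      congr 2
      ring
    have hG := ((d1.const_mul (Complex.Gamma (1-α))).div d2 hΓne2)
    rw [hFG, HasDerivAt.deriv (f := fun y : ℂ => Complex.Gamma (1-α) * Complex.Gamma (1-y) / Complex.Gamma ((2-α)-y)) hG]
    rw [psiC, psiC, cBeta, show (1:ℂ)-α+(1-β) = (2-α)-β by ring, show (2:ℂ)-α-β = (2-α)-β by ring]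
    field_simp
    ring
end
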